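/- Let U ⊆ ℂ be open with x·(x²+3x+3) ≠ 0 for all x ∈ U. Let Ψ : ℂ → ℂ be twice differentiable on U and satisfy x(x²+3x+3)·Ψ''(x) + (3x²+6x+3)·Ψ'(x) + (x+1)·Ψ(x) = 0 for all x ∈ U, and let g : ℂ → ℂ be twice differentiable on U with g(x)² = x(x²+3x+3) for all x ∈ U. Then ψ := g·Ψ solves ψ'' = Q₂·ψ on U, where Q₂(x) := −(1/4)·(x+1)(x+3)(x²+3)/(x²(x²+3x+3)²). -/

import Mathlib

open Complex

/-- `f` solves the equation `ψ'' = Q·ψ` on the open set `U`. -/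
def SolvesOn (Q f : ℂ → ℂ) (U : Set ℂ) : Prop :=
  (∀ x ∈ U, DifferentiableAt ℂ f x) ∧ (∀ x ∈ U, DifferentiableAt ℂ (deriv f) x) ∧
    ∀ x ∈ U, deriv (deriv f) x = Q x * f x

theorem alg_key (x G G1 G2 P P1 P2 : ℂ)
    (hx : x ≠ 0) (hq : x ^ 2 + 3 * x + 3 ≠ 0)
    (e1 : 2 * G * G1 = 3 * x ^ 2 + 6 * x + 3)
    (e2 : 2 * G1 ^ 2 + 2 * G * G2 = 6 * x + 6)
    (e3 : G ^ 2 = x * (x ^ 2 + 3 * x + 3))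
    (e4 : x * (x ^ 2 + 3 * x + 3) * P2 + (3 * x ^ 2 + 6 * x + 3) * P1 + (x + 1) * P = 0) :
    G2 * P + 2 * G1 * P1 + G * P2
      = -(1 / 4) * ((x + 1) * (x + 3) * (x ^ 2 + 3)) / (x ^ 2 * (x ^ 2 + 3 * x + 3) ^ 2)
        * (G * P) := by
  rw [div_mul_eq_mul_div, eq_div_iff (by simp [pow_eq_zero_iff, hx, hq])]
  linear_combination
    ((x * (x ^ 2 + 3 * x + 3)) * P1 * G
      - (1/4) * G * P * ((3 * x ^ 2 + 6 * x + 3) + 2 * G * G1)) * e1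
    + ((1/2) * (x * (x ^ 2 + 3 * x + 3)) * G * P) * e2
    + (-2 * (x * (x ^ 2 + 3 * x + 3)) * P1 * G1 - (x * (x ^ 2 + 3 * x + 3)) * G2 * P
      + G * P * G1 ^ 2) * e3
    + ((x * (x ^ 2 + 3 * x + 3)) * G) * e4

theorem chudnovsky_two_normal_form
    (U : Set ℂ) (hU : IsOpen U)
    (hUne : ∀ x ∈ U, x * (x ^ 2 + 3 * x + 3) ≠ 0)
    (Ψ g : ℂ → ℂ)
    (hΨ1 : ∀ x ∈ U, DifferentiableAt ℂ Ψ x)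
    (hΨ2 : ∀ x ∈ U, DifferentiableAt ℂ (deriv Ψ) x)
    (hode : ∀ x ∈ U, x * (x ^ 2 + 3 * x + 3) * deriv (deriv Ψ) x
      + (3 * x ^ 2 + 6 * x + 3) * deriv Ψ x + (x + 1) * Ψ x = 0)
    (hg1 : ∀ x ∈ U, DifferentiableAt ℂ g x)
    (hg2 : ∀ x ∈ U, DifferentiableAt ℂ (deriv g) x)
    (hgsq : ∀ x ∈ U, g x ^ 2 = x * (x ^ 2 + 3 * x + 3)) :
    SolvesOn (fun x => -(1 / 4) * ((x + 1) * (x + 3) * (x ^ 2 + 3))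
        / (x ^ 2 * (x ^ 2 + 3 * x + 3) ^ 2))
      (fun x => g x * Ψ x) U := by
  -- the first derivative of g * Ψ, valid on U
  have hd1 : ∀ x ∈ U, deriv (fun y => g y * Ψ y) x
      = deriv g x * Ψ x + g x * deriv Ψ x := fun x hx =>
    deriv_mul (hg1 x hx) (hΨ1 x hx)
  -- first derivative function eventually equals the explicit formula near each point of U
  have hev1 : ∀ x ∈ U, deriv (fun y => g y * Ψ y)
      =ᶠ[nhds x] fun y => deriv g y * Ψ y + g y * deriv Ψ y := by
    intro x hx
    filter_upwards [hU.mem_nhds hx] with y hy using hd1 y hy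
  have hdiff1 : ∀ x ∈ U, DifferentiableAt ℂ (fun y => deriv g y * Ψ y + g y * deriv Ψ y) x :=
    fun x hx => (((hg2 x hx).mul (hΨ1 x hx)).add ((hg1 x hx).mul (hΨ2 x hx)))
  -- second derivative formula
  have hd2 : ∀ x ∈ U, deriv (deriv (fun y => g y * Ψ y)) x
      = deriv (deriv g) x * Ψ x + 2 * deriv g x * deriv Ψ x + g x * deriv (deriv Ψ) x := by
    intro x hx
    rw [(hev1 x hx).deriv_eq]
    rw [deriv_fun_add ((hg2 x hx).fun_mul (hΨ1 x hx)) ((hg1 x hx).fun_mul (hΨ2 x hx)),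
      deriv_fun_mul (hg2 x hx) (hΨ1 x hx), deriv_fun_mul (hg1 x hx) (hΨ2 x hx)]
    ring
  refine ⟨fun x hx => (hg1 x hx).mul (hΨ1 x hx), ?_, ?_⟩
  · intro x hx
    exact (Filter.EventuallyEq.differentiableAt_iff (hev1 x hx)).mpr (hdiff1 x hx)
  · intro x hx
    have hx0 : x ≠ 0 := fun h => hUne x hx (by rw [h]; ring)
    have hq0 : x ^ 2 + 3 * x + 3 ≠ 0 := fun h => hUne x hx (by rw [h]; ring)
    -- derivative of the polynomial p
    have hp' : ∀ y : ℂ, HasDerivAt (fun z : ℂ => z * (z ^ 2 + 3 * z + 3))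
        (3 * y ^ 2 + 6 * y + 3) y := by
      intro y
      have h := (hasDerivAt_id' y).fun_mul
        (((hasDerivAt_pow 2 y).fun_add ((hasDerivAt_id' y).const_mul 3)).add_const 3)
      exact h.congr_deriv (by push_cast; ring)
    -- e1 : 2 g g' = p'
    have e1 : ∀ y ∈ U, 2 * g y * deriv g y = 3 * y ^ 2 + 6 * y + 3 := by
      intro y hy
      have heq : (fun z => g z ^ 2) =ᶠ[nhds y] fun z => z * (z ^ 2 + 3 * z + 3) := by
        filter_upwards [hU.mem_nhds hy] with z hz using hgsq z hz
      have := heq.deriv_eq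
      rw [deriv_fun_pow (hg1 y hy) 2, (hp' y).deriv] at this
      rw [show (2 : ℂ) * g y * deriv g y = (2 : ℕ) * g y ^ (2 - 1) * deriv g y by
        push_cast; ring]
      exact this
    -- e2 : 2 g'^2 + 2 g g'' = p''
    have e2 : 2 * deriv g x ^ 2 + 2 * g x * deriv (deriv g) x = 6 * x + 6 := by
      have heq : (fun z => 2 * g z * deriv g z) =ᶠ[nhds x]
          fun z => 3 * z ^ 2 + 6 * z + 3 := by
        filter_upwards [hU.mem_nhds hx] with z hz using e1 z hz
      have hder := heq.deriv_eq
      have hrhs : deriv (fun z : ℂ => 3 * z ^ 2 + 6 * z + 3) x = 6 * x + 6 := by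
        have h := (((hasDerivAt_pow 2 x).const_mul 3).fun_add
          ((hasDerivAt_id' x).const_mul 6)).add_const 3
        have := h.deriv
        rw [this]; push_cast; ring
      have hlhs : deriv (fun z => 2 * g z * deriv g z) x
          = 2 * (deriv g x * deriv g x + g x * deriv (deriv g) x) := by
        have : (fun z => 2 * g z * deriv g z) = fun z => 2 * (g z * deriv g z) := by
          funext z; ring
        rw [this, deriv_const_mul 2 ((hg1 x hx).fun_mul (hg2 x hx)),
          deriv_fun_mul (hg1 x hx) (hg2 x hx)]
      rw [hlhs, hrhs] at hder
      linear_combination hder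
    rw [hd2 x hx]
    exact alg_key x (g x) (deriv g x) (deriv (deriv g) x) (Ψ x) (deriv Ψ x)
      (deriv (deriv Ψ) x) hx0 hq0 (e1 x hx) e2 (hgsq x hx) (hode x hx)
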